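/- Let F be a finite field of characteristic 2 with q = |F|, and let W4 be the pencil of conics spanned by X0·X1 and X1·X2. Then every nonzero element of W4 is a product of two linearly independent linear forms over F (so all q+1 members are real line pairs), W4 has exactly q+2 base points, and the stabilizer {g ∈ GL(3,F) : g • W4 = W4} has cardinality (q−1)·(q^2−1)·(q^2−q). -/

import Mathlib

noncomputable section

open MvPolynomial

namespace Pencils

/-- The space of ternary polynomials over `F`. -/
abbrev Poly (F : Type*) [Field F] : Type _ := MvPolynomial (Fin 3) F

variable {F : Type*} [Field F]

/-- The coefficient of the monomial `X i * X j` in `f` (for `i = j`, of `X i ^ 2`). -/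
def qc (f : Poly F) (i j : Fin 3) : F :=
  MvPolynomial.coeff (Finsupp.single i 1 + Finsupp.single j 1) f

/-- A quadratic form over a field of characteristic 2 is singular iff
`a00·a12² + a11·a02² + a22·a01² + a01·a02·a12 = 0`. -/
def IsSingular (f : Poly F) : Prop :=
  qc f 0 0 * qc f 1 2 ^ 2 + qc f 1 1 * qc f 0 2 ^ 2 + qc f 2 2 * qc f 0 1 ^ 2 +
    qc f 0 1 * qc f 0 2 * qc f 1 2 = 0

/-- A pencil of conics: a 2-dimensional subspace of the space of
homogeneous quadratic forms in `X 0, X 1, X 2`. -/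
def IsPencil (W : Submodule F (Poly F)) : Prop :=
  W ≤ homogeneousSubmodule (Fin 3) F 2 ∧ Module.finrank F ↥W = 2

/-- A member of a pencil `W` is a 1-dimensional subspace of `W`. -/
def IsMember (W L : Submodule F (Poly F)) : Prop :=
  L ≤ W ∧ Module.finrank F ↥L = 1

/-- A double line: all nonzero elements are squares of nonzero linear forms. -/
def IsDoubleLine (L : Submodule F (Poly F)) : Prop :=
  ∀ f ∈ L, f ≠ 0 → ∃ ℓ : Poly F, ℓ.IsHomogeneous 1 ∧ ℓ ≠ 0 ∧ f = ℓ ^ 2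

/-- A real line pair: all nonzero elements are products of two linearly
independent linear forms over `F`. -/
def IsRealPair (L : Submodule F (Poly F)) : Prop :=
  ∀ f ∈ L, f ≠ 0 → ∃ ℓ m : Poly F, ℓ.IsHomogeneous 1 ∧ m.IsHomogeneous 1 ∧
    LinearIndependent F ![ℓ, m] ∧ f = ℓ * m

/-- `f` has a nonzero linear form over `F` as a factor. -/
def HasLinearFactor (f : Poly F) : Prop :=
  ∃ ℓ : Poly F, ℓ.IsHomogeneous 1 ∧ ℓ ≠ 0 ∧ ℓ ∣ f

/-- An imaginary line pair: all nonzero elements are singular with no linear factor over `F`. -/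
def IsImagPair (L : Submodule F (Poly F)) : Prop :=
  ∀ f ∈ L, f ≠ 0 → IsSingular f ∧ ¬ HasLinearFactor f

/-- A nonsingular member: all nonzero elements are nonsingular. -/
def IsNonsingularConic (L : Submodule F (Poly F)) : Prop :=
  ∀ f ∈ L, f ≠ 0 → ¬ IsSingular f

/-- `a1 W`: number of members of `W` that are double lines. -/
def a1 (W : Submodule F (Poly F)) : ℕ :=
  Nat.card {L : Submodule F (Poly F) // IsMember W L ∧ IsDoubleLine L}

/-- `a2r W`: number of members of `W` that are real line pairs. -/
def a2r (W : Submodule F (Poly F)) : ℕ :=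
  Nat.card {L : Submodule F (Poly F) // IsMember W L ∧ IsRealPair L}

/-- `a2i W`: number of members of `W` that are imaginary line pairs. -/
def a2i (W : Submodule F (Poly F)) : ℕ :=
  Nat.card {L : Submodule F (Poly F) // IsMember W L ∧ IsImagPair L}

/-- `a3 W`: number of members of `W` that are nonsingular conics. -/
def a3 (W : Submodule F (Poly F)) : ℕ :=
  Nat.card {L : Submodule F (Poly F) // IsMember W L ∧ IsNonsingularConic L}

/-- A base point of the pencil `W`: a 1-dimensional subspace of `F³` on which
every element of `W` vanishes. -/
def IsBasePoint (W : Submodule F (Poly F)) (P : Submodule F (Fin 3 → F)) : Prop :=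
  Module.finrank F ↥P = 1 ∧ ∀ f ∈ W, ∀ v ∈ P, MvPolynomial.eval v f = 0

/-- `b W`: the number of base points of `W`. -/
def b (W : Submodule F (Poly F)) : ℕ :=
  Nat.card {P : Submodule F (Fin 3 → F) // IsBasePoint W P}

/-- The substitution action of a matrix `g` on quadratic forms: `(g • f)(X) = f(g·X)`. -/
def act (g : Matrix (Fin 3) (Fin 3) F) : Poly F →ₗ[F] Poly F :=
  (MvPolynomial.aeval (fun i => ∑ j : Fin 3, MvPolynomial.C (g i j) * MvPolynomial.X j) :
    Poly F →ₐ[F] Poly F).toLinearMap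


lemma mem_W4 {f : Poly F} :
    f ∈ Submodule.span F {(X 0 * X 1 : Poly F), X 1 * X 2} ↔
      ∃ a c : F, f = C a * (X 0 * X 1) + C c * (X 1 * X 2) := by
  rw [Submodule.mem_span_pair]
  simp_rw [smul_eq_C_mul, eq_comm]

lemma part1 (f : Poly F) (hf : f ∈ Submodule.span F {(X 0 * X 1 : Poly F), X 1 * X 2})
    (h0 : f ≠ 0) : ∃ ℓ m : Poly F, ℓ.IsHomogeneous 1 ∧ m.IsHomogeneous 1 ∧
      LinearIndependent F ![ℓ, m] ∧ f = ℓ * m := by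
  obtain ⟨a, c, rfl⟩ := mem_W4.mp hf
  have hac : a ≠ 0 ∨ c ≠ 0 := by
    by_contra h
    push_neg at h
    simp [h.1, h.2] at h0
  refine ⟨X 1, C a * X 0 + C c * X 2, isHomogeneous_X _ _,
    ((isHomogeneous_C_mul_X a 0).add (isHomogeneous_C_mul_X c 2)), ?_, by ring⟩
  rw [LinearIndependent.pair_iff]
  intro s t hst
  have h1 : ∀ i : Fin 3, coeff (Finsupp.single i 1)
      (s • (X 1 : Poly F) + t • (C a * X 0 + C c * X 2)) = 0 := by
    rw [hst]; simp
  have e1 := h1 1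
  have e0 := h1 0
  have e2 := h1 2
  simp [smul_eq_C_mul, coeff_C_mul, coeff_X', Finsupp.single_eq_single_iff] at e0 e1 e2
  refine ⟨e1, ?_⟩
  rcases hac with h | h
  · tauto
  · tauto

lemma fr1 {M : Type*} [AddCommGroup M] [Module F M] {P : Submodule F M}
    (h : Module.finrank F ↥P = 1) : ∃ v : M, v ≠ 0 ∧ P = Submodule.span F {v} := by
  have : FiniteDimensional F ↥P := FiniteDimensional.of_finrank_eq_succ h
  have : Nontrivial ↥P := Module.nontrivial_of_finrank_pos (R := F) (by omega)
  obtain ⟨⟨v, hvP⟩, hv0⟩ := exists_ne (0 : ↥P)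
  have hv : v ≠ 0 := by simpa [Submodule.mk_eq_zero] using hv0
  refine ⟨v, hv, ?_⟩
  refine (Submodule.eq_of_le_of_finrank_eq ?_ ?_).symm
  · rwa [Submodule.span_singleton_le_iff_mem]
  · rw [finrank_span_singleton hv, h]

lemma basept_iff {P : Submodule F (Fin 3 → F)} :
    IsBasePoint (Submodule.span F {(X 0 * X 1 : Poly F), X 1 * X 2}) P ↔
      Module.finrank F ↥P = 1 ∧ ∀ v ∈ P, v 0 * v 1 = 0 ∧ v 1 * v 2 = 0 := by
  constructor
  · rintro ⟨h1, h2⟩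
    refine ⟨h1, fun v hv => ⟨?_, ?_⟩⟩
    · simpa using h2 (X 0 * X 1) (Submodule.subset_span (Set.mem_insert _ _)) v hv
    · simpa using h2 (X 1 * X 2) (Submodule.subset_span (Set.mem_insert_of_mem _ rfl)) v hv
  · rintro ⟨h1, h2⟩
    refine ⟨h1, fun f hf v hv => ?_⟩
    obtain ⟨a, c, rfl⟩ := mem_W4.mp hf
    simp [(h2 v hv).1, (h2 v hv).2]

/-- Parametrization of base points of W4. -/
def bp : Option (Option F) → Submodule F (Fin 3 → F)
  | none => Submodule.span F {![0,1,0]}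
  | some none => Submodule.span F {![0,0,1]}
  | some (some t) => Submodule.span F {![1,0,t]}

lemma bp_basept (x : Option (Option F)) :
    IsBasePoint (Submodule.span F {(X 0 * X 1 : Poly F), X 1 * X 2}) (bp x) := by
  rw [basept_iff]
  rcases x with _ | _ | t
  · refine ⟨finrank_span_singleton fun h => by simpa using congrFun h 1, fun v hv => ?_⟩
    obtain ⟨c, rfl⟩ := Submodule.mem_span_singleton.mp hv
    simp
  · refine ⟨finrank_span_singleton fun h => by simpa using congrFun h 2, fun v hv => ?_⟩
    obtain ⟨c, rfl⟩ := Submodule.mem_span_singleton.mp hv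
    simp
  · refine ⟨finrank_span_singleton fun h => by simpa using congrFun h 0, fun v hv => ?_⟩
    obtain ⟨c, rfl⟩ := Submodule.mem_span_singleton.mp hv
    simp

lemma bp_inj : Function.Injective (bp (F := F)) := by
  have key : ∀ u w : Fin 3 → F, Submodule.span F {u} = Submodule.span F {w} →
      ∃ c : F, c • w = u := fun u w hh =>
    Submodule.mem_span_singleton.mp (hh ▸ Submodule.mem_span_singleton_self u)
  intro x y h
  rcases x with _ | _ | t <;> rcases y with _ | _ | s <;>
      first
        | rfl
        | · obtain ⟨c, hc⟩ := key _ _ h.symm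
            have h0 := congrFun hc 0
            have h1 := congrFun hc 1
            have h2 := congrFun hc 2
            simp_all

lemma bp_surj {P : Submodule F (Fin 3 → F)}
    (h : IsBasePoint (Submodule.span F {(X 0 * X 1 : Poly F), X 1 * X 2}) P) :
    ∃ x, bp x = P := by
  rw [basept_iff] at h
  obtain ⟨h1, h2⟩ := h
  obtain ⟨v, hv, rfl⟩ := fr1 h1
  obtain ⟨hv01, hv12⟩ := h2 v (Submodule.mem_span_singleton_self v)
  by_cases hv1 : v 1 = 0
  · by_cases hv0 : v 0 = 0
    · have hv2 : v 2 ≠ 0 := fun hv2 => hv (funext fun i => by fin_cases i <;> assumption)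
      refine ⟨some none, ?_⟩
      have : v = v 2 • ![0,0,1] := funext fun i => by fin_cases i <;> simp [hv0, hv1]
      rw [bp, this, Submodule.span_singleton_smul_eq (IsUnit.mk0 _ hv2)]
    · refine ⟨some (some (v 2 / v 0)), ?_⟩
      have hveq : v = v 0 • ![1,0,v 2 / v 0] := funext fun i => by
        fin_cases i <;> simp [hv1, mul_div_cancel₀ _ hv0]
      have hsm := Submodule.span_singleton_smul_eq (IsUnit.mk0 _ hv0) ![1,0,v 2 / v 0]
      rw [bp, ← hsm, ← hveq]
  · have hv0 : v 0 = 0 := by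
      rcases mul_eq_zero.mp hv01 with h' | h' <;> tauto
    have hv2 : v 2 = 0 := by
      rcases mul_eq_zero.mp hv12 with h' | h' <;> tauto
    refine ⟨none, ?_⟩
    have : v = v 1 • ![0,1,0] := funext fun i => by fin_cases i <;> simp [hv0, hv2]
    rw [bp, this, Submodule.span_singleton_smul_eq (IsUnit.mk0 _ hv1)]

lemma act_X (g : Matrix (Fin 3) (Fin 3) F) (i : Fin 3) :
    act g (X i) = C (g i 0) * X 0 + C (g i 1) * X 1 + C (g i 2) * X 2 := by
  simp [act, Fin.sum_univ_three]

lemma act_mul (g : Matrix (Fin 3) (Fin 3) F) (p q : Poly F) :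
    act g (p * q) = act g p * act g q := by
  simp [act]

lemma act_act (g h : Matrix (Fin 3) (Fin 3) F) (f : Poly F) :
    act g (act h f) = act (h * g) f := by
  simp only [act, AlgHom.toLinearMap_apply, comp_aeval_apply]
  have hfun : (fun i => (aeval fun i => ∑ j : Fin 3, C (g i j) * X j)
        (∑ j : Fin 3, C (h i j) * (X j : Poly F))) =
      fun i => ∑ j : Fin 3, C ((h * g) i j) * (X j : Poly F) := by
    funext i
    rw [map_sum]
    simp only [map_mul, aeval_C, aeval_X, Finset.mul_sum, algebraMap_eq]
    rw [Finset.sum_comm]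
    refine Finset.sum_congr rfl fun k _ => ?_
    rw [Matrix.mul_apply, map_sum, Finset.sum_mul]
    refine Finset.sum_congr rfl fun j _ => ?_
    rw [map_mul, mul_assoc]
  rw [hfun]

lemma act_one (f : Poly F) : act (1 : Matrix (Fin 3) (Fin 3) F) f = f := by
  have : (fun i => ∑ j : Fin 3, MvPolynomial.C ((1 : Matrix (Fin 3) (Fin 3) F) i j) *
      MvPolynomial.X j) = fun i => (X i : Poly F) := by
    funext i
    rw [Finset.sum_eq_single i]
    · simp
    · intro b _ hb
      rw [Matrix.one_apply, if_neg (fun h => hb h.symm)]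
      simp
    · simp
  simp [act, this]

lemma key_eval {f : Poly F} (hf : f ∈ Submodule.span F {(X 0 * X 1 : Poly F), X 1 * X 2})
    (v : Fin 3 → F) (h01 : v 0 * v 1 = 0) (h12 : v 1 * v 2 = 0) :
    MvPolynomial.eval v f = 0 := by
  obtain ⟨a, c, rfl⟩ := mem_W4.mp hf
  simp only [map_add, map_mul, eval_C, eval_X]
  rw [h01, h12, mul_zero, mul_zero, add_zero]

/-- The shape of stabilizer matrices. -/
def Shape (a : Matrix (Fin 3) (Fin 3) F) : Prop :=
  a 0 1 = 0 ∧ a 1 0 = 0 ∧ a 1 2 = 0 ∧ a 2 1 = 0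

lemma shape_of_stab (g : (Matrix (Fin 3) (Fin 3) F)ˣ)
    (hW : Submodule.map (act g.val) (Submodule.span F {(X 0 * X 1 : Poly F), X 1 * X 2}) =
      Submodule.span F {(X 0 * X 1 : Poly F), X 1 * X 2}) : Shape g.val := by
  set W4 : Submodule F (Poly F) := Submodule.span F {(X 0 * X 1 : Poly F), X 1 * X 2} with hW4
  set a : Matrix (Fin 3) (Fin 3) F := g.val with ha
  have hdet : a.det ≠ 0 := by
    have := (Matrix.isUnit_iff_isUnit_det a).mp g.isUnit
    exact this.ne_zero
  have hm1 : act a (X 0 * X 1) ∈ W4 := by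
    rw [← hW]
    exact Submodule.mem_map_of_mem (Submodule.subset_span (Set.mem_insert _ _))
  have hm2 : act a (X 1 * X 2) ∈ W4 := by
    rw [← hW]
    exact Submodule.mem_map_of_mem (Submodule.subset_span (Set.mem_insert_of_mem _ rfl))
  have ev : ∀ i j : Fin 3, act a (X i * X j) ∈ W4 → ∀ v : Fin 3 → F,
      v 0 * v 1 = 0 → v 1 * v 2 = 0 →
      (a i 0 * v 0 + a i 1 * v 1 + a i 2 * v 2) * (a j 0 * v 0 + a j 1 * v 1 + a j 2 * v 2)
        = 0 := by
    intro i j hm v h01 h12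
    have := key_eval hm v h01 h12
    rw [act_mul, act_X, act_X] at this
    simpa using this
  have eA1 := ev 0 1 hm1 ![1,0,0] (by norm_num) (by norm_num)
  have eA2 := ev 0 1 hm1 ![0,1,0] (by norm_num [Matrix.cons_val_two]) (by norm_num [Matrix.cons_val_two])
  have eA3 := ev 0 1 hm1 ![0,0,1] (by norm_num) (by norm_num)
  have eA4 := ev 0 1 hm1 ![1,0,1] (by norm_num) (by norm_num)
  have eB1 := ev 1 2 hm2 ![1,0,0] (by norm_num) (by norm_num)
  have eB2 := ev 1 2 hm2 ![0,1,0] (by norm_num [Matrix.cons_val_two]) (by norm_num [Matrix.cons_val_two])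
  have eB3 := ev 1 2 hm2 ![0,0,1] (by norm_num) (by norm_num)
  have eB4 := ev 1 2 hm2 ![1,0,1] (by norm_num) (by norm_num)
  norm_num [Matrix.cons_val_two] at eA1 eA2 eA3 eA4 eB1 eB2 eB3 eB4
  rw [Matrix.det_fin_three] at hdet
  have h10 : a 1 0 = 0 := by
    by_contra h
    have h00 : a 0 0 = 0 := eA1.resolve_right h
    have h20 : a 2 0 = 0 := eB1.resolve_left h
    have h02 : a 0 2 = 0 := by
      rcases eA4 with h' | h'
      · rw [h00, zero_add] at h'
        exact h'
      · rcases eA3 with h'' | h''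
        · exact h''
        · rw [h'', add_zero] at h'
          exact absurd h' h
    have h22 : a 2 2 = 0 := by
      rcases eB4 with h' | h'
      · rcases eB3 with h'' | h''
        · rw [h'', add_zero] at h'
          exact absurd h' h
        · exact h''
      · rw [h20, zero_add] at h'
        exact h'
    apply hdet
    rw [h00, h20, h02, h22]; ring
  have h12' : a 1 2 = 0 := by
    by_contra h
    have h02 : a 0 2 = 0 := eA3.resolve_right h
    have h22 : a 2 2 = 0 := eB3.resolve_left h
    have h00 : a 0 0 = 0 := by
      rcases eA4 with h' | h'
      · rw [h02, add_zero] at h'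
        exact h'
      · rw [h10, zero_add] at h'
        exact absurd h' h
    have h20 : a 2 0 = 0 := by
      rcases eB4 with h' | h'
      · rw [h10, zero_add] at h'
        exact absurd h' h
      · rw [h22, add_zero] at h'
        exact h'
    apply hdet
    rw [h00, h20, h02, h22]; ring
  have h11 : a 1 1 ≠ 0 := by
    intro h
    apply hdet
    rw [h10, h12', h]; ring
  exact ⟨eA2.resolve_right h11, h10, h12', eB2.resolve_left h11⟩

lemma stab_of_shape (g : (Matrix (Fin 3) (Fin 3) F)ˣ) (hs : Shape g.val) :
    Submodule.map (act g.val) (Submodule.span F {(X 0 * X 1 : Poly F), X 1 * X 2}) =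
      Submodule.span F {(X 0 * X 1 : Poly F), X 1 * X 2} := by
  obtain ⟨h01, h10, h12, h21⟩ := hs
  set W4 : Submodule F (Poly F) := Submodule.span F {(X 0 * X 1 : Poly F), X 1 * X 2} with hW4
  set a : Matrix (Fin 3) (Fin 3) F := g.val with ha
  have hi1 : act a (X 0 * X 1) =
      C (a 0 0 * a 1 1) * (X 0 * X 1) + C (a 0 2 * a 1 1) * (X 1 * X 2) := by
    rw [act_mul, act_X, act_X, h01, h10, h12, map_mul, map_mul]
    simp only [C_0]
    ring
  have hi2 : act a (X 1 * X 2) =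
      C (a 2 0 * a 1 1) * (X 0 * X 1) + C (a 2 2 * a 1 1) * (X 1 * X 2) := by
    rw [act_mul, act_X, act_X, h21, h10, h12, map_mul, map_mul]
    simp only [C_0]
    ring
  have hle : Submodule.map (act a) W4 ≤ W4 := by
    rw [hW4, Submodule.map_span, Set.image_insert_eq, Set.image_singleton, Submodule.span_le]
    rw [Set.insert_subset_iff, Set.singleton_subset_iff]
    constructor
    · exact mem_W4.mpr ⟨_, _, hi1⟩
    · exact mem_W4.mpr ⟨_, _, hi2⟩
  let e : Poly F ≃ₗ[F] Poly F :=
    LinearEquiv.ofLinear (act a) (act ((g⁻¹ : _) : Matrix (Fin 3) (Fin 3) F))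
      (by
        ext f
        simp only [LinearMap.coe_comp, Function.comp_apply, LinearMap.id_coe, id_eq]
        rw [act_act, Units.inv_mul, act_one])
      (by
        ext f
        simp only [LinearMap.coe_comp, Function.comp_apply, LinearMap.id_coe, id_eq]
        rw [act_act, Units.mul_inv, act_one])
  haveI : FiniteDimensional F ↥W4 :=
    FiniteDimensional.span_of_finite F ((Set.finite_singleton _).insert _)
  refine Submodule.eq_of_le_of_finrank_eq hle ?_
  have : Submodule.map (act a) W4 = Submodule.map (e : Poly F →ₗ[F] Poly F) W4 := rfl
  rw [this, LinearEquiv.finrank_map_eq e W4]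

def emb (l : Fˣ) (A : GL (Fin 2) F) : Matrix (Fin 3) (Fin 3) F :=
  ![![A.val 0 0, 0, A.val 0 1], ![0, (l : F), 0], ![A.val 1 0, 0, A.val 1 1]]

lemma emb_det (l : Fˣ) (A : GL (Fin 2) F) : (emb l A).det = (l : F) * A.val.det := by
  rw [Matrix.det_fin_three, Matrix.det_fin_two]
  simp [emb]
  ring

lemma emb_isUnit (l : Fˣ) (A : GL (Fin 2) F) : IsUnit (emb l A) := by
  rw [Matrix.isUnit_iff_isUnit_det, emb_det, isUnit_iff_ne_zero]
  exact mul_ne_zero (Units.ne_zero l)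
    (((Matrix.isUnit_iff_isUnit_det A.val).mp A.isUnit).ne_zero)

lemma stab_card [Fintype F] :
    Nat.card {g : (Matrix (Fin 3) (Fin 3) F)ˣ //
      Submodule.map (act g.val) (Submodule.span F {(X 0 * X 1 : Poly F), X 1 * X 2}) =
        Submodule.span F {(X 0 * X 1 : Poly F), X 1 * X 2}} =
      (Fintype.card F - 1) * (Fintype.card F ^ 2 - 1) *
        (Fintype.card F ^ 2 - Fintype.card F) := by
  classical
  set W4 : Submodule F (Poly F) := Submodule.span F {(X 0 * X 1 : Poly F), X 1 * X 2} with hW4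
  set Φ : Fˣ × GL (Fin 2) F →
      {g : (Matrix (Fin 3) (Fin 3) F)ˣ // Submodule.map (act g.val) W4 = W4} :=
    fun p => ⟨(emb_isUnit p.1 p.2).unit, by
      apply stab_of_shape
      rw [IsUnit.unit_spec]
      refine ⟨?_, ?_, ?_, ?_⟩ <;> simp [emb]⟩ with hΦ
  have hΦval : ∀ p : Fˣ × GL (Fin 2) F, ((Φ p).val : Matrix (Fin 3) (Fin 3) F) = emb p.1 p.2 :=
    fun p => IsUnit.unit_spec _
  have hbij : Function.Bijective Φ := by
    constructor
    · intro p q hpq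
      have hval : emb p.1 p.2 = emb q.1 q.2 := by
        rw [← hΦval p, ← hΦval q, hpq]
      have hl : (p.1 : F) = (q.1 : F) := by
        have := congrFun (congrFun hval 1) 1
        simpa [emb] using this
      have hA : (p.2 : Matrix (Fin 2) (Fin 2) F) = (q.2 : Matrix (Fin 2) (Fin 2) F) := by
        ext i j
        fin_cases i <;> fin_cases j
        · simpa [emb] using congrFun (congrFun hval 0) 0
        · simpa [emb] using congrFun (congrFun hval 0) 2
        · simpa [emb] using congrFun (congrFun hval 2) 0
        · simpa [emb] using congrFun (congrFun hval 2) 2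
      exact Prod.ext (Units.ext hl) (Units.ext hA)
    · rintro ⟨g, hg⟩
      obtain ⟨h01, h10, h12, h21⟩ := shape_of_stab g hg
      set a : Matrix (Fin 3) (Fin 3) F := g.val with ha
      have hdet : a.det ≠ 0 :=
        ((Matrix.isUnit_iff_isUnit_det a).mp g.isUnit).ne_zero
      have hdet3 : a.det = a 1 1 * (a 0 0 * a 2 2 - a 0 2 * a 2 0) := by
        rw [Matrix.det_fin_three, h01, h10, h12, h21]; ring
      have h11 : a 1 1 ≠ 0 := fun h => hdet (by rw [hdet3, h, zero_mul])
      have hB : Matrix.det (![![a 0 0, a 0 2], ![a 2 0, a 2 2]] : Matrix (Fin 2) (Fin 2) F) ≠ 0 := by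
        intro h
        apply hdet
        rw [hdet3]
        have h2 : Matrix.det (![![a 0 0, a 0 2], ![a 2 0, a 2 2]] : Matrix (Fin 2) (Fin 2) F) =
            a 0 0 * a 2 2 - a 0 2 * a 2 0 := (Matrix.det_fin_two _).trans rfl
        have h3 : a 0 0 * a 2 2 - a 0 2 * a 2 0 = 0 := h2 ▸ h
        rw [h3, mul_zero]
      refine ⟨⟨Units.mk0 (a 1 1) h11,
        Matrix.GeneralLinearGroup.mkOfDetNeZero _ hB⟩, ?_⟩
      apply Subtype.ext
      apply Units.ext
      rw [hΦval]
      ext i j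
      fin_cases i <;> fin_cases j <;>
        simp [emb, Matrix.GeneralLinearGroup.mkOfDetNeZero, Matrix.GeneralLinearGroup.mk',
          Matrix.unitOfDetInvertible, unitOfInvertible, h01, h10, h12, h21, ← ha]
  rw [← Nat.card_eq_of_bijective Φ hbij, Nat.card_prod, Nat.card_eq_fintype_card,
    Fintype.card_units, Matrix.card_GL_field, Fin.prod_univ_two]
  norm_num [mul_assoc]


/-- in the pencil `W4 = ⟨X0·X1, X1·X2⟩` every nonzero element is a product of
two linearly independent linear forms, `W4` has exactly `q+2` base points, and its
stabiliser in `GL(3,F)` has cardinality `(q−1)(q²−1)(q²−q)`. -/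
theorem omega4_pencil (F : Type*) [Field F] [Fintype F] [CharP F 2] :
    let q := Fintype.card F
    let W4 : Submodule F (Poly F) := Submodule.span F {X 0 * X 1, X 1 * X 2}
    (∀ f ∈ W4, f ≠ 0 → ∃ ℓ m : Poly F, ℓ.IsHomogeneous 1 ∧ m.IsHomogeneous 1 ∧
      LinearIndependent F ![ℓ, m] ∧ f = ℓ * m) ∧
    b W4 = q + 2 ∧
    Nat.card {g : (Matrix (Fin 3) (Fin 3) F)ˣ // Submodule.map (act g.val) W4 = W4} =
      (q - 1) * (q ^ 2 - 1) * (q ^ 2 - q) := by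
  intro q W4
  refine ⟨fun f hf h0 => part1 f hf h0, ?_, ?_⟩
  · have hb : Function.Bijective (fun x : Option (Option F) =>
        (⟨bp x, bp_basept x⟩ :
          {P : Submodule F (Fin 3 → F) // IsBasePoint W4 P})) := by
      constructor
      · intro x y hxy
        exact bp_inj (congrArg Subtype.val hxy)
      · rintro ⟨P, hP⟩
        obtain ⟨x, hx⟩ := bp_surj hP
        exact ⟨x, Subtype.ext hx⟩
    rw [show b W4 = Nat.card {P : Submodule F (Fin 3 → F) // IsBasePoint W4 P} from rfl]
    rw [← Nat.card_eq_of_bijective _ hb, Nat.card_eq_fintype_card]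
    simp [Fintype.card_option, q]
  · exact stab_card

end Pencils
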